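/- Let Y ∈ ℝ^{c×n} have rank c with SVD Y = U_Y Σ_Y V_Yᵀ where V_Y ∈ St_c(ℝⁿ), and let X ∈ ℝ^{c×n} have rank c with fixed singular value matrix Σ_X (singular values σ₁ ≥ … ≥ σ_c) and fixed left singular vectors U_X. Then the minimum over V_X ∈ St_c(ℝⁿ) of the nuclear norm of the stacked matrix [Y ; U_X Σ_X V_Xᵀ] is attained at V_X = V_Y, and the minimum value equals Σ_{i=1}^{c} √(μ_i² + σ_i²), where μ₁ ≥ … ≥ μ_c are the singular values of Y. -/

import Mathlib

open Matrix

/-- The nuclear norm of a real matrix: the sum of its singular values. -/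
noncomputable def nuclearNorm {m n : Type*} [Fintype m] [Fintype n] [DecidableEq n]
    (A : Matrix m n ℝ) : ℝ :=
  ∑ i, Real.sqrt ((Matrix.isHermitian_conjTranspose_mul_self A).eigenvalues i)

open Finset


/-- Karamata core for `√`, strictly positive case. -/
lemma karamata_sqrt_core (n : ℕ) (x y : ℕ → ℝ)
    (hxa : ∀ ⦃i j : ℕ⦄, i ≤ j → j < n → x j ≤ x i)
    (hya : ∀ ⦃i j : ℕ⦄, i ≤ j → j < n → y j ≤ y i)
    (hx0 : ∀ i < n, 0 < x i) (hy0 : ∀ i < n, 0 < y i)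
    (hmaj : ∀ k ≤ n, ∑ i ∈ range k, x i ≤ ∑ i ∈ range k, y i)
    (htot : ∑ i ∈ range n, x i = ∑ i ∈ range n, y i) :
    ∑ i ∈ range n, Real.sqrt (y i) ≤ ∑ i ∈ range n, Real.sqrt (x i) := by
  rw [← sub_nonneg, ← Finset.sum_sub_distrib]
  set c : ℕ → ℝ := fun i => 1 / (Real.sqrt (x i) + Real.sqrt (y i)) with hc
  set z : ℕ → ℝ := fun i => x i - y i with hz
  have hterm : ∀ i ∈ range n, Real.sqrt (x i) - Real.sqrt (y i) = c i • z i := by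
    intro i hi
    rw [mem_range] at hi
    have hxp := hx0 i hi
    have hyp := hy0 i hi
    have hden : 0 < Real.sqrt (x i) + Real.sqrt (y i) := by positivity
    rw [smul_eq_mul, hc, hz]
    show Real.sqrt (x i) - Real.sqrt (y i) = 1 / (Real.sqrt (x i) + Real.sqrt (y i)) * (x i - y i)
    rw [one_div, inv_mul_eq_div, eq_div_iff hden.ne']
    linear_combination Real.sq_sqrt hxp.le - Real.sq_sqrt hyp.le
  rw [Finset.sum_congr rfl hterm, Finset.sum_range_by_parts]
  have hS : ∀ k ≤ n, ∑ i ∈ range k, z i ≤ 0 := by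
    intro k hk
    simp only [hz, Finset.sum_sub_distrib, sub_nonpos]
    exact hmaj k hk
  have htot' : ∑ i ∈ range n, z i = 0 := by
    simp only [hz, Finset.sum_sub_distrib, sub_eq_zero]
    exact htot
  rw [htot', smul_zero, zero_sub, le_neg, neg_zero]
  apply Finset.sum_nonpos
  intro i hi
  rw [mem_range] at hi
  have hi1 : i + 1 < n := by omega
  have hcmono : c i ≤ c (i + 1) := by
    apply one_div_le_one_div_of_le
    · have := hx0 (i+1) hi1; have := hy0 (i+1) hi1; positivity
    · have h1 := hxa (Nat.le_succ i) hi1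
      have h2 := hya (Nat.le_succ i) hi1
      have := Real.sqrt_le_sqrt h1
      have := Real.sqrt_le_sqrt h2
      linarith
  have hSi : ∑ j ∈ range (i + 1), z j ≤ 0 := hS (i+1) (by omega)
  rw [smul_eq_mul]
  exact mul_nonpos_of_nonneg_of_nonpos (by linarith) hSi

/-- Karamata for `√`, nonnegative case. -/
lemma karamata_sqrt (n : ℕ) (x y : ℕ → ℝ)
    (hxa : ∀ ⦃i j : ℕ⦄, i ≤ j → j < n → x j ≤ x i)
    (hya : ∀ ⦃i j : ℕ⦄, i ≤ j → j < n → y j ≤ y i)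
    (hx0 : ∀ i < n, 0 ≤ x i) (hy0 : ∀ i < n, 0 ≤ y i)
    (hmaj : ∀ k ≤ n, ∑ i ∈ range k, x i ≤ ∑ i ∈ range k, y i)
    (htot : ∑ i ∈ range n, x i = ∑ i ∈ range n, y i) :
    ∑ i ∈ range n, Real.sqrt (y i) ≤ ∑ i ∈ range n, Real.sqrt (x i) := by
  apply le_of_forall_pos_le_add
  intro ε' hε'
  set ε : ℝ := (ε' / (n + 1)) ^ 2 with hεdef
  have hεpos : 0 < ε := by positivity
  have key := karamata_sqrt_core n (fun i => x i + ε) (fun i => y i + ε)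
    (fun i j hij hj => by simpa using hxa hij hj)
    (fun i j hij hj => by simpa using hya hij hj)
    (fun i hi => by have := hx0 i hi; positivity)
    (fun i hi => by have := hy0 i hi; positivity)
    (fun k hk => by simpa [Finset.sum_add_distrib] using hmaj k hk)
    (by simp [Finset.sum_add_distrib, htot])
  have hsqε : Real.sqrt ε = ε' / (n + 1) := by
    rw [hεdef, Real.sqrt_sq (by positivity)]
  have h1 : ∀ i < n, Real.sqrt (y i) ≤ Real.sqrt (y i + ε) :=
    fun i hi => Real.sqrt_le_sqrt (by linarith)
  have h2 : ∀ i < n, Real.sqrt (x i + ε) ≤ Real.sqrt (x i) + Real.sqrt ε := by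
    intro i hi
    have hx := hx0 i hi
    have : x i + ε ≤ (Real.sqrt (x i) + Real.sqrt ε) ^ 2 := by
      have e1 : Real.sqrt (x i) ^ 2 = x i := Real.sq_sqrt hx
      have e2 : Real.sqrt ε ^ 2 = ε := Real.sq_sqrt hεpos.le
      have : 0 ≤ Real.sqrt (x i) * Real.sqrt ε := by positivity
      nlinarith
    calc Real.sqrt (x i + ε) ≤ Real.sqrt ((Real.sqrt (x i) + Real.sqrt ε) ^ 2) :=
            Real.sqrt_le_sqrt this
      _ = Real.sqrt (x i) + Real.sqrt ε := Real.sqrt_sq (by positivity)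
  calc ∑ i ∈ range n, Real.sqrt (y i) ≤ ∑ i ∈ range n, Real.sqrt (y i + ε) := by
        apply Finset.sum_le_sum; intro i hi; exact h1 i (mem_range.mp hi)
    _ ≤ ∑ i ∈ range n, Real.sqrt (x i + ε) := key
    _ ≤ ∑ i ∈ range n, (Real.sqrt (x i) + Real.sqrt ε) := by
        apply Finset.sum_le_sum; intro i hi; exact h2 i (mem_range.mp hi)
    _ = (∑ i ∈ range n, Real.sqrt (x i)) + n * Real.sqrt ε := by
        rw [Finset.sum_add_distrib]; simp [mul_comm]
    _ ≤ (∑ i ∈ range n, Real.sqrt (x i)) + ε' := by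
        rw [hsqε]
        have hn1 : (0:ℝ) < n + 1 := by positivity
        have hq : (n:ℝ)/(n+1) ≤ 1 := by rw [div_le_one hn1]; linarith
        have : (n : ℝ) * (ε' / (n + 1)) ≤ ε' :=
          calc (n:ℝ) * (ε' / (n + 1)) = ((n:ℝ)/(n+1)) * ε' := by ring
            _ ≤ 1 * ε' := mul_le_mul_of_nonneg_right hq hε'.le
            _ = ε' := one_mul _
        linarith

open Finset

lemma card_filter_lt_fin (m k : ℕ) (hk : k ≤ m) :
    (Finset.univ.filter fun i : Fin m => (i : ℕ) < k).card = k := by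
  rw [Finset.card_filter]
  rw [Fin.sum_univ_eq_sum_range (fun i => if i < k then 1 else 0)]
  rw [← Finset.sum_filter]
  have : (Finset.range m).filter (fun i => i < k) = Finset.range k := by
    ext i; simp [Finset.mem_filter, Finset.mem_range]; omega
  simp [this]

lemma sum_filter_lt_fin {m : ℕ} (x : Fin m → ℝ) (k : ℕ) (hk : k ≤ m) :
    ∑ i ∈ Finset.univ.filter (fun i : Fin m => (i : ℕ) < k), x i
      = ∑ i ∈ Finset.range k, (if h : i < m then x ⟨i, h⟩ else 0) := by
  rw [Finset.sum_filter]
  have hcongr : ∀ a : Fin m, (if (a : ℕ) < k then x a else 0)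
      = (fun i => if i < k then (if h : i < m then x ⟨i, h⟩ else 0) else 0) (a : ℕ) := by
    intro a; simp [a.isLt]
  rw [Finset.sum_congr rfl (fun a _ => hcongr a)]
  rw [Fin.sum_univ_eq_sum_range (fun i => if i < k then (if h : i < m then x ⟨i, h⟩ else 0) else 0)]
  rw [← Finset.sum_filter]
  have : (Finset.range m).filter (fun i => i < k) = Finset.range k := by
    ext i; simp [Finset.mem_filter, Finset.mem_range]; omega
  rw [this]

/-- If `d` is antitone nonnegative and `0 ≤ t ≤ 1` with `∑ t ≤ k`, then
`∑ d t ≤ ` sum of the `k` largest values of `d`. -/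
lemma sum_mul_le_sum_largest {m : ℕ} (d t : Fin m → ℝ) (k : ℕ)
    (hd : Antitone d) (hd0 : ∀ j, 0 ≤ d j) (ht0 : ∀ j, 0 ≤ t j) (ht1 : ∀ j, t j ≤ 1)
    (hts : ∑ j, t j ≤ k) :
    ∑ j, d j * t j ≤ ∑ j ∈ Finset.univ.filter (fun j : Fin m => (j : ℕ) < k), d j := by
  by_cases hk : k < m
  · set θ := d ⟨k, hk⟩ with hθ
    have hθ0 : 0 ≤ θ := hd0 _
    set s := Finset.univ.filter (fun j : Fin m => (j : ℕ) < k) with hs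
    have hcard : s.card = k := card_filter_lt_fin m k hk.le
    rw [← Finset.sum_filter_add_sum_filter_not Finset.univ (fun j : Fin m => (j : ℕ) < k)
      (fun j => d j * t j)]
    have h1 : ∑ j ∈ s, d j * t j ≤ ∑ j ∈ s, (d j + θ * (t j - 1)) := by
      apply Finset.sum_le_sum
      intro j hj
      rw [hs, Finset.mem_filter] at hj
      have hdj : θ ≤ d j := hd (by simp [Fin.le_def]; omega)
      nlinarith [ht1 j, ht0 j]
    have h2 : ∑ j ∈ Finset.univ.filter (fun j : Fin m => ¬ (j : ℕ) < k), d j * t j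
        ≤ ∑ j ∈ Finset.univ.filter (fun j : Fin m => ¬ (j : ℕ) < k), θ * t j := by
      apply Finset.sum_le_sum
      intro j hj
      rw [Finset.mem_filter] at hj
      have hdj : d j ≤ θ := hd (by simp [Fin.le_def]; omega)
      exact mul_le_mul_of_nonneg_right hdj (ht0 j)
    have h3 : ∑ j ∈ s, (d j + θ * (t j - 1))
        + ∑ j ∈ Finset.univ.filter (fun j : Fin m => ¬ (j : ℕ) < k), θ * t j
        = ∑ j ∈ s, d j + θ * ((∑ j, t j) - k) := by
      rw [Finset.sum_add_distrib]
      have : ∑ j ∈ s, θ * (t j - 1) = θ * ((∑ j ∈ s, t j) - k) := by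
        rw [← Finset.mul_sum, Finset.sum_sub_distrib]
        simp [hcard]
      rw [this, ← Finset.mul_sum]
      have : ∑ j, t j = ∑ j ∈ s, t j
          + ∑ j ∈ Finset.univ.filter (fun j : Fin m => ¬ (j : ℕ) < k), t j := by
        rw [hs, Finset.sum_filter_add_sum_filter_not]
      rw [this]; ring
    have h4 : θ * ((∑ j, t j) - k) ≤ 0 :=
      mul_nonpos_of_nonneg_of_nonpos hθ0 (by linarith)
    linarith
  · push_neg at hk
    have : Finset.univ.filter (fun j : Fin m => (j : ℕ) < k) = Finset.univ := by
      ext j; simp; omega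
    rw [this]
    apply Finset.sum_le_sum
    intro j _
    nth_rewrite 2 [← mul_one (d j)]
    exact mul_le_mul_of_nonneg_left (ht1 j) (hd0 j)

open Matrix Finset

variable {R : Type*} [CommRing R]

lemma mul_submatrix_col {l m p ι : Type*} [Fintype m]
    (M : Matrix l m R) (N : Matrix m p R) (g : ι → p) :
    M * (N.submatrix id g) = (M * N).submatrix id g := by
  ext i j; simp [Matrix.mul_apply]

lemma transpose_submatrix_col_mul {m p q ι κ : Type*} [Fintype m]
    (M : Matrix m p R) (N : Matrix m q R) (f : ι → p) (g : κ → q) :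
    (M.submatrix id f)ᵀ * (N.submatrix id g) = (Mᵀ * N).submatrix f g := by
  ext i j; simp [Matrix.mul_apply]

lemma submatrix_one_inj {m ι : Type*} [DecidableEq m] [DecidableEq ι]
    {f : ι → m} (hf : Function.Injective f) :
    (1 : Matrix m m R).submatrix f f = 1 := by
  ext i j
  simp [Matrix.one_apply, hf.eq_iff]

lemma psd_diag_entry_nonneg {m : Type*} [Fintype m] [DecidableEq m]
    {M : Matrix m m ℝ} (hM : M.PosSemidef) (j : m) : 0 ≤ M j j := by
  exact hM.diag_nonneg

lemma psd_one_sub_mul_transpose {n ι : Type*} [Fintype n] [DecidableEq n] [Fintype ι] [DecidableEq ι]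
    (W : Matrix n ι ℝ) (hW : Wᵀ * W = 1) :
    PosSemidef (1 - W * Wᵀ) := by
  have hPP : (W * Wᵀ) * (W * Wᵀ) = W * Wᵀ := by
    rw [Matrix.mul_assoc W Wᵀ (W * Wᵀ), ← Matrix.mul_assoc Wᵀ W Wᵀ, hW]
    simp
  have hsym : (1 - W * Wᵀ)ᴴ = 1 - W * Wᵀ := by
    rw [conjTranspose_eq_transpose_of_trivial]
    simp [Matrix.transpose_sub, Matrix.transpose_mul]
  have hmul : (1 - W * Wᵀ)ᴴ * (1 - W * Wᵀ) = 1 - W * Wᵀ := by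
    rw [hsym, Matrix.sub_mul, Matrix.mul_sub, Matrix.mul_sub, Matrix.mul_one, Matrix.one_mul,
      hPP, Matrix.mul_one]
    abel
  have := Matrix.posSemidef_conjTranspose_mul_self (1 - W * Wᵀ)
  rwa [hmul] at this

example (f : Fin 3 → ℝ) : Matrix.diagonal ((RCLike.ofReal : ℝ → ℝ) ∘ f) = Matrix.diagonal f := by
  simp

section eig
variable {n : ℕ} {H : Matrix (Fin n) (Fin n) ℝ} (hH : H.IsHermitian)

lemma eigU_transpose_mul_self :
    (hH.eigenvectorUnitary : Matrix (Fin n) (Fin n) ℝ)ᵀ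
      * (hH.eigenvectorUnitary : Matrix (Fin n) (Fin n) ℝ) = 1 := by
  rw [← conjTranspose_eq_transpose_of_trivial]
  exact Matrix.mem_unitaryGroup_iff'.mp hH.eigenvectorUnitary.2

lemma eigU_mul_self_transpose :
    (hH.eigenvectorUnitary : Matrix (Fin n) (Fin n) ℝ)
      * (hH.eigenvectorUnitary : Matrix (Fin n) (Fin n) ℝ)ᵀ = 1 := by
  rw [← conjTranspose_eq_transpose_of_trivial]
  exact Matrix.mem_unitaryGroup_iff.mp hH.eigenvectorUnitary.2

lemma eigU_diag :
    (hH.eigenvectorUnitary : Matrix (Fin n) (Fin n) ℝ)ᵀ * H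
      * (hH.eigenvectorUnitary : Matrix (Fin n) (Fin n) ℝ) = Matrix.diagonal hH.eigenvalues := by
  have h := hH.spectral_theorem
  simp only [Unitary.conjStarAlgAut_apply, Matrix.star_eq_conjTranspose,
    conjTranspose_eq_transpose_of_trivial] at h
  calc _ = (hH.eigenvectorUnitary : Matrix (Fin n) (Fin n) ℝ)ᵀ
        * ((hH.eigenvectorUnitary : Matrix (Fin n) (Fin n) ℝ)
          * Matrix.diagonal (RCLike.ofReal ∘ hH.eigenvalues)
          * (hH.eigenvectorUnitary : Matrix (Fin n) (Fin n) ℝ)ᵀ)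
        * (hH.eigenvectorUnitary : Matrix (Fin n) (Fin n) ℝ) :=
        congrArg (fun M => (hH.eigenvectorUnitary : Matrix (Fin n) (Fin n) ℝ)ᵀ * M
          * (hH.eigenvectorUnitary : Matrix (Fin n) (Fin n) ℝ)) h
    _ = _ := by
      simp only [← Matrix.mul_assoc, eigU_transpose_mul_self hH, Matrix.one_mul]
      rw [Matrix.mul_assoc, eigU_transpose_mul_self hH, Matrix.mul_one]
      simp

lemma trace_eq_sum_eigenvalues : H.trace = ∑ i, hH.eigenvalues i := by
  simpa using hH.trace_eq_sum_eigenvalues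

end eig

open scoped MatrixOrder

lemma trace_sqrt_eq {n : ℕ} {H : Matrix (Fin n) (Fin n) ℝ} (hH : H.PosSemidef) :
    (CFC.sqrt H).trace = ∑ i, Real.sqrt (hH.1.eigenvalues i) := by
  rw [CFC.sqrt_eq_cfc, cfc_nnreal_eq_real _ H, hH.1.cfc_eq, IsHermitian.cfc,
    Unitary.conjStarAlgAut_apply, Matrix.trace_mul_cycle, Unitary.coe_star_mul_self,
    Matrix.one_mul, Matrix.trace_diagonal]
  refine Finset.sum_congr rfl fun i _ => ?_
  simp [max_eq_left (hH.eigenvalues_nonneg i)]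

section kyfan
open Matrix Finset

lemma kyfan_piece {n c : ℕ} {ι : Type*} [Fintype ι] [DecidableEq ι]
    (V : Matrix (Fin n) (Fin c) ℝ) (hV : Vᵀ * V = 1)
    (d : Fin c → ℝ) (hd : Antitone d) (hd0 : ∀ i, 0 ≤ d i)
    (W : Matrix (Fin n) ι ℝ) (hW : Wᵀ * W = 1) (k : ℕ) (hk : Fintype.card ι ≤ k) :
    (Wᵀ * (V * Matrix.diagonal d * Vᵀ) * W).trace
      ≤ ∑ j ∈ Finset.univ.filter (fun j : Fin c => (j : ℕ) < k), d j := by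
  set G := Vᵀ * W with hG
  have hGt : Gᵀ = Wᵀ * V := by rw [hG, Matrix.transpose_mul, Matrix.transpose_transpose]
  have hexpr : Wᵀ * (V * Matrix.diagonal d * Vᵀ) * W = Gᵀ * (Matrix.diagonal d * G) := by
    rw [hGt, hG]
    simp only [Matrix.mul_assoc]
  set t : Fin c → ℝ := fun j => ∑ l, (G j l) ^ 2 with ht
  have htr : (Gᵀ * (Matrix.diagonal d * G)).trace = ∑ j, d j * t j := by
    have hdiagonal : ∀ l, (Gᵀ * (Matrix.diagonal d * G)) l l
        = ∑ j, G j l * (d j * G j l) := by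
      intro l
      simp [Matrix.mul_apply, Matrix.transpose_apply, Matrix.diagonal_apply, ite_mul,
        Finset.sum_ite_eq]
    rw [Matrix.trace]
    calc ∑ l, (Gᵀ * (Matrix.diagonal d * G)).diag l
        = ∑ l, ∑ j, G j l * (d j * G j l) := by
          apply Finset.sum_congr rfl; intro l _; exact hdiagonal l
      _ = ∑ j, ∑ l, G j l * (d j * G j l) := Finset.sum_comm
      _ = ∑ j, d j * t j := by
          apply Finset.sum_congr rfl; intro j _
          rw [ht, Finset.mul_sum]
          apply Finset.sum_congr rfl; intro l _; ring
  -- t j ≤ 1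
  have hGGt : ∀ j, (G * Gᵀ) j j = t j := by
    intro j; simp [Matrix.mul_apply, Matrix.transpose_apply, ht, sq]
  have hpsd1 : PosSemidef (1 - G * Gᵀ) := by
    have base := (psd_one_sub_mul_transpose W hW).conjTranspose_mul_mul_same V
    rw [conjTranspose_eq_transpose_of_trivial] at base
    have heq : Vᵀ * (1 - W * Wᵀ) * V = 1 - G * Gᵀ := by
      rw [Matrix.mul_sub, Matrix.mul_one, Matrix.sub_mul, hV, hGt, hG]
      simp only [Matrix.mul_assoc]
    rwa [heq] at base
  have ht1 : ∀ j, t j ≤ 1 := by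
    intro j
    have := psd_diag_entry_nonneg hpsd1 j
    have h1 : ((1 : Matrix (Fin c) (Fin c) ℝ) - G * Gᵀ) j j = 1 - (G * Gᵀ) j j := by
      simp [Matrix.sub_apply, Matrix.one_apply]
    rw [show (1 - G * Gᵀ) = ((1 : Matrix (Fin c) (Fin c) ℝ) - G * Gᵀ) from rfl, h1, hGGt j] at this
    linarith
  have ht0 : ∀ j, 0 ≤ t j := by
    intro j; rw [ht]; positivity
  -- sum t ≤ card ι
  have hpsd2 : PosSemidef ((1 : Matrix ι ι ℝ) - Gᵀ * G) := by
    have base := (psd_one_sub_mul_transpose V hV).conjTranspose_mul_mul_same W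
    rw [conjTranspose_eq_transpose_of_trivial] at base
    have heq : Wᵀ * (1 - V * Vᵀ) * W = 1 - Gᵀ * G := by
      rw [Matrix.mul_sub, Matrix.mul_one, Matrix.sub_mul, hW, hGt, hG]
      simp only [Matrix.mul_assoc]
    rwa [heq] at base
  have hts : ∑ j, t j ≤ (Fintype.card ι : ℝ) := by
    have hswap : ∑ j, t j = ∑ l, (Gᵀ * G) l l := by
      simp only [ht]
      rw [Finset.sum_comm]
      apply Finset.sum_congr rfl; intro l _
      simp [Matrix.mul_apply, Matrix.transpose_apply, sq]
    rw [hswap]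
    have : ∀ l : ι, (Gᵀ * G) l l ≤ 1 := by
      intro l
      have := psd_diag_entry_nonneg hpsd2 l
      have h1 : ((1 : Matrix ι ι ℝ) - Gᵀ * G) l l = 1 - (Gᵀ * G) l l := by
        simp [Matrix.sub_apply, Matrix.one_apply]
      rw [h1] at this
      linarith
    calc ∑ l, (Gᵀ * G) l l ≤ ∑ _l : ι, (1 : ℝ) := Finset.sum_le_sum (fun l _ => this l)
      _ = (Fintype.card ι : ℝ) := by simp
  rw [hexpr, htr]
  exact sum_mul_le_sum_largest d t k hd hd0 ht0 ht1
    (hts.trans (by exact_mod_cast hk))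

end kyfan

section assembly
open Matrix Finset

lemma sum_range_pad {c : ℕ} (g : Fin c → ℝ) (k : ℕ) :
    ∑ m ∈ Finset.range k, (if h : m < c then g ⟨m, h⟩ else 0)
      = ∑ j ∈ Finset.univ.filter (fun j : Fin c => (j : ℕ) < k), g j := by
  have h1 : ∀ m : ℕ, (if h : m < c then g ⟨m, h⟩ else 0)
      = if m < c then (if h : m < c then g ⟨m, h⟩ else 0) else 0 := by
    intro m; split <;> simp_all
  rw [Finset.sum_congr rfl (fun m _ => h1 m), ← Finset.sum_filter]
  have h2 : (Finset.range k).filter (fun m => m < c) = Finset.range (min k c) := by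
    ext m; simp only [Finset.mem_filter, Finset.mem_range]; omega
  rw [h2, ← sum_filter_lt_fin g (min k c) (min_le_right k c)]
  apply Finset.sum_congr _ (fun j _ => rfl)
  ext j; simp only [Finset.mem_filter, Finset.mem_univ, true_and]; omega

lemma trace_conj {c n : ℕ} (V : Matrix (Fin n) (Fin c) ℝ) (hV : Vᵀ * V = 1)
    (d : Fin c → ℝ) : (V * Matrix.diagonal d * Vᵀ).trace = ∑ i, d i := by
  rw [Matrix.trace_mul_cycle, hV, Matrix.one_mul, Matrix.trace_diagonal]

lemma factor_gram {c n : ℕ} (U : Matrix (Fin c) (Fin c) ℝ) (V : Matrix (Fin n) (Fin c) ℝ)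
    (hU : Uᵀ * U = 1) (d : Fin c → ℝ) :
    (U * Matrix.diagonal d * Vᵀ)ᵀ * (U * Matrix.diagonal d * Vᵀ)
      = V * Matrix.diagonal (fun i => d i ^ 2) * Vᵀ := by
  rw [Matrix.transpose_mul, Matrix.transpose_mul, Matrix.transpose_transpose,
    Matrix.diagonal_transpose]
  have h1 : Uᵀ * (U * (Matrix.diagonal d * Vᵀ)) = Matrix.diagonal d * Vᵀ := by
    rw [← Matrix.mul_assoc, hU, Matrix.one_mul]
  have h2 : Matrix.diagonal d * Matrix.diagonal d = Matrix.diagonal (fun i => d i ^ 2) := by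
    rw [Matrix.diagonal_mul_diagonal]
    congr 1; funext i; ring
  calc V * (Matrix.diagonal d * Uᵀ) * (U * Matrix.diagonal d * Vᵀ)
      = V * (Matrix.diagonal d * (Uᵀ * (U * (Matrix.diagonal d * Vᵀ)))) := by
        simp only [Matrix.mul_assoc]
    _ = V * (Matrix.diagonal d * (Matrix.diagonal d * Vᵀ)) := by rw [h1]
    _ = V * Matrix.diagonal (fun i => d i ^ 2) * Vᵀ := by
        rw [← Matrix.mul_assoc (Matrix.diagonal d), h2]
        simp only [Matrix.mul_assoc]

/-- The key inequality: Ky Fan majorization plus Karamata. -/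
lemma key_ineq {c n : ℕ} (hcn : c ≤ n) {H : Matrix (Fin n) (Fin n) ℝ} (hH : H.IsHermitian)
    (V1 V2 : Matrix (Fin n) (Fin c) ℝ) (hV1 : V1ᵀ * V1 = 1) (hV2 : V2ᵀ * V2 = 1)
    (μ σ : Fin c → ℝ) (hμanti : Antitone μ) (hμpos : ∀ i, 0 < μ i)
    (hσanti : Antitone σ) (hσpos : ∀ i, 0 < σ i)
    (hHeq : H = V1 * Matrix.diagonal (fun i => μ i ^ 2) * V1ᵀ
      + V2 * Matrix.diagonal (fun i => σ i ^ 2) * V2ᵀ) :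
    ∑ i, Real.sqrt (μ i ^ 2 + σ i ^ 2) ≤ ∑ i, Real.sqrt (hH.eigenvalues i) := by
  classical
  have hμ2anti : Antitone (fun i => μ i ^ 2) :=
    fun i j hij => pow_le_pow_left₀ (hμpos j).le (hμanti hij) 2
  have hσ2anti : Antitone (fun i => σ i ^ 2) :=
    fun i j hij => pow_le_pow_left₀ (hσpos j).le (hσanti hij) 2
  have hP1 : PosSemidef (V1 * Matrix.diagonal (fun i => μ i ^ 2) * V1ᵀ) := by
    have := (Matrix.PosSemidef.diagonal (fun i => by positivity :
      ∀ i, (0:ℝ) ≤ μ i ^ 2)).mul_mul_conjTranspose_same V1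
    rwa [conjTranspose_eq_transpose_of_trivial] at this
  have hP2 : PosSemidef (V2 * Matrix.diagonal (fun i => σ i ^ 2) * V2ᵀ) := by
    have := (Matrix.PosSemidef.diagonal (fun i => by positivity :
      ∀ i, (0:ℝ) ≤ σ i ^ 2)).mul_mul_conjTranspose_same V2
    rwa [conjTranspose_eq_transpose_of_trivial] at this
  have hpsd : H.PosSemidef := hHeq ▸ (hP1.add hP2)
  set lam := hH.eigenvalues with hlamdef
  have hlam0 : ∀ i, 0 ≤ lam i := fun i => hpsd.eigenvalues_nonneg i
  set e : Equiv.Perm (Fin n) := (Fin.revPerm).trans (Tuple.sort lam) with he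
  set lam' : Fin n → ℝ := fun i => lam (e i) with hlam'
  have hlam'anti : Antitone lam' := by
    intro i j hij
    exact Tuple.monotone_sort lam (Fin.rev_le_rev.mpr hij)
  set xh : ℕ → ℝ := fun m => if h : m < n then lam' ⟨m, h⟩ else 0 with hxh
  set yh : ℕ → ℝ := fun m => if h : m < c then μ ⟨m, h⟩ ^ 2 + σ ⟨m, h⟩ ^ 2 else 0 with hyh
  -- trace of H
  have htraceH : H.trace = ∑ j : Fin c, (μ j ^ 2 + σ j ^ 2) := by
    rw [hHeq, Matrix.trace_add, trace_conj V1 hV1, trace_conj V2 hV2,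
      ← Finset.sum_add_distrib]
  -- the Ky Fan majorization
  have hmaj : ∀ k ≤ n, ∑ m ∈ range k, xh m ≤ ∑ m ∈ range k, yh m := by
    intro k hk
    rw [hxh, ← sum_filter_lt_fin lam' k hk, hyh,
      sum_range_pad (fun j => μ j ^ 2 + σ j ^ 2) k]
    set S : Finset (Fin n) := (Finset.univ.filter (fun i : Fin n => (i : ℕ) < k)).image e
      with hS
    have hsum_img : ∑ i ∈ Finset.univ.filter (fun i : Fin n => (i : ℕ) < k), lam' i
        = ∑ j ∈ S, lam j := by
      rw [hS, Finset.sum_image (fun i _ j _ h => e.injective h)]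
    have hScard : Fintype.card {x // x ∈ S} = k := by
      rw [Fintype.card_coe, hS, Finset.card_image_of_injective _ e.injective,
        card_filter_lt_fin n k hk]
    rw [hsum_img]
    -- the matrix W of top-k eigenvectors
    set U : Matrix (Fin n) (Fin n) ℝ := (hH.eigenvectorUnitary : Matrix (Fin n) (Fin n) ℝ)
      with hU
    set f : {x // x ∈ S} → Fin n := fun t => (t : Fin n) with hf
    set W : Matrix (Fin n) {x // x ∈ S} ℝ := U.submatrix id f with hW
    have hWW : Wᵀ * W = 1 := by
      rw [hW, transpose_submatrix_col_mul, eigU_transpose_mul_self hH,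
        submatrix_one_inj Subtype.val_injective]
    have hsub : Wᵀ * H * W = (Matrix.diagonal lam).submatrix f f := by
      rw [hW, Matrix.mul_assoc, mul_submatrix_col, transpose_submatrix_col_mul,
        ← Matrix.mul_assoc, eigU_diag hH]
    have htrsub : ((Matrix.diagonal lam).submatrix f f).trace = ∑ j ∈ S, lam j := by
      rw [Matrix.trace]
      have : ∀ t : {x // x ∈ S}, ((Matrix.diagonal lam).submatrix f f).diag t = lam (t : Fin n) := by
        intro t; simp [Matrix.diag, Matrix.submatrix_apply, hf]
      rw [Finset.sum_congr rfl (fun t _ => this t)]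
      exact Finset.sum_coe_sort S lam
    have hsplit : (Wᵀ * H * W).trace
        = (Wᵀ * (V1 * Matrix.diagonal (fun i => μ i ^ 2) * V1ᵀ) * W).trace
          + (Wᵀ * (V2 * Matrix.diagonal (fun i => σ i ^ 2) * V2ᵀ) * W).trace := by
      rw [hHeq, Matrix.mul_add, Matrix.add_mul, Matrix.trace_add]
    have hb1 := kyfan_piece V1 hV1 (fun i => μ i ^ 2) hμ2anti (fun i => by positivity)
      W hWW k (le_of_eq hScard)
    have hb2 := kyfan_piece V2 hV2 (fun i => σ i ^ 2) hσ2anti (fun i => by positivity)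
      W hWW k (le_of_eq hScard)
    calc ∑ j ∈ S, lam j = (Wᵀ * H * W).trace := by rw [hsub, htrsub]
      _ ≤ ∑ j ∈ Finset.univ.filter (fun j : Fin c => (j : ℕ) < k), μ j ^ 2
          + ∑ j ∈ Finset.univ.filter (fun j : Fin c => (j : ℕ) < k), σ j ^ 2 := by
            rw [hsplit]; exact add_le_add hb1 hb2
      _ = ∑ j ∈ Finset.univ.filter (fun j : Fin c => (j : ℕ) < k), (μ j ^ 2 + σ j ^ 2) := by
            rw [← Finset.sum_add_distrib]
  -- totals agree
  have hxsum : ∑ m ∈ range n, xh m = ∑ i : Fin n, lam' i := by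
    rw [← Fin.sum_univ_eq_sum_range xh n]
    apply Finset.sum_congr rfl; intro i _
    simp [hxh, i.isLt]
  have hysum : ∑ m ∈ range n, yh m = ∑ j : Fin c, (μ j ^ 2 + σ j ^ 2) := by
    rw [hyh, sum_range_pad (fun j => μ j ^ 2 + σ j ^ 2) n]
    apply Finset.sum_congr _ (fun j _ => rfl)
    ext j; simpa using lt_of_lt_of_le j.isLt hcn
  have htot : ∑ m ∈ range n, xh m = ∑ m ∈ range n, yh m := by
    rw [hxsum, hysum, hlam']
    rw [Equiv.sum_comp e lam]
    rw [← trace_eq_sum_eigenvalues hH, htraceH]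
  -- apply Karamata
  have hkar := karamata_sqrt n xh yh
    (fun i j hij hj => by
      simp only [hxh]
      rw [dif_pos hj, dif_pos (lt_of_le_of_lt hij hj)]
      exact hlam'anti (by exact hij))
    (fun i j hij hj => by
      simp only [hyh]
      by_cases hjc : j < c
      · rw [dif_pos hjc, dif_pos (lt_of_le_of_lt hij hjc)]
        exact add_le_add (hμ2anti (by exact hij)) (hσ2anti (by exact hij))
      · rw [dif_neg hjc]
        by_cases hic : i < c
        · rw [dif_pos hic]; positivity
        · rw [dif_neg hic])
    (fun i hi => by
      simp only [hxh]; rw [dif_pos hi]; exact hlam0 _)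
    (fun i hi => by
      simp only [hyh]; split
      · positivity
      · exact le_rfl)
    hmaj htot
  -- convert both sides
  have hxs : ∑ m ∈ range n, Real.sqrt (xh m) = ∑ i, Real.sqrt (lam i) := by
    rw [← Fin.sum_univ_eq_sum_range (fun m => Real.sqrt (xh m)) n]
    have : ∀ i : Fin n, Real.sqrt (xh (i : ℕ)) = (fun i => Real.sqrt (lam i)) (e i) := by
      intro i; simp [hxh, i.isLt, hlam']
    rw [Finset.sum_congr rfl (fun i _ => this i)]
    exact Equiv.sum_comp e (fun i => Real.sqrt (lam i))
  have hys : ∑ m ∈ range n, Real.sqrt (yh m) = ∑ j : Fin c, Real.sqrt (μ j ^ 2 + σ j ^ 2) := by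
    have h1 : ∀ m : ℕ, Real.sqrt (yh m) = if h : m < c then Real.sqrt (μ ⟨m, h⟩ ^ 2 + σ ⟨m, h⟩ ^ 2) else 0 := by
      intro m; simp only [hyh]; split <;> simp
    rw [Finset.sum_congr rfl (fun m _ => h1 m),
      sum_range_pad (fun j => Real.sqrt (μ j ^ 2 + σ j ^ 2)) n]
    apply Finset.sum_congr _ (fun j _ => rfl)
    ext j; simpa using lt_of_lt_of_le j.isLt hcn
  rw [← hxs, ← hys]
  exact hkar

end assembly

section mainthm
open Matrix Finset

lemma gram_fromRows {c n : ℕ} (A B : Matrix (Fin c) (Fin n) ℝ) :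
    (fromRows A B)ᵀ * fromRows A B = Aᵀ * A + Bᵀ * B := by
  rw [Matrix.transpose_fromRows, Matrix.fromCols_mul_fromRows]

/-- For `Y = U_Y Σ_Y V_Yᵀ` of rank `c` with singular values
`μ₁ ≥ … ≥ μ_c > 0`, and `X = U_X Σ_X V_Xᵀ` of rank `c` with fixed singular values
`σ₁ ≥ … ≥ σ_c > 0` and fixed left singular vectors `U_X`, the minimum over
`V_X ∈ St_c(ℝⁿ)` of `‖[Y ; U_X Σ_X V_Xᵀ]‖₊` is attained at `V_X = V_Y` and equals
`∑ i √(μ_i² + σ_i²)`. -/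
theorem nuclearNorm_stack_min_over_stiefel
    {c n : ℕ} (Y : Matrix (Fin c) (Fin n) ℝ)
    (UY : Matrix (Fin c) (Fin c) ℝ) (μ : Fin c → ℝ) (VY : Matrix (Fin n) (Fin c) ℝ)
    (hUY : UYᵀ * UY = 1) (hVY : VYᵀ * VY = 1)
    (hμanti : Antitone μ) (hμpos : ∀ i, 0 < μ i)
    (hSVD : Y = UY * Matrix.diagonal μ * VYᵀ)
    (UX : Matrix (Fin c) (Fin c) ℝ) (σ : Fin c → ℝ)
    (hUX : UXᵀ * UX = 1)
    (hσanti : Antitone σ) (hσpos : ∀ i, 0 < σ i) :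
    (∀ VX : Matrix (Fin n) (Fin c) ℝ, VXᵀ * VX = 1 →
        (∑ i, Real.sqrt (μ i ^ 2 + σ i ^ 2)) ≤
          nuclearNorm (fromRows Y (UX * Matrix.diagonal σ * VXᵀ))) ∧
      nuclearNorm (fromRows Y (UX * Matrix.diagonal σ * VYᵀ)) =
        ∑ i, Real.sqrt (μ i ^ 2 + σ i ^ 2) := by
  have hcn : c ≤ n := by
    have h1 : (VYᵀ * VY).rank = c := by
      rw [hVY]
      simpa using Matrix.rank_one (R := ℝ) (n := Fin c)
    have h2 : (VYᵀ * VY).rank ≤ VY.rank := Matrix.rank_mul_le_right VYᵀ VY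
    have h3 : VY.rank ≤ n := by
      simpa using Matrix.rank_le_card_height VY
    omega
  have hYgram : Yᵀ * Y = VY * Matrix.diagonal (fun i => μ i ^ 2) * VYᵀ := by
    rw [hSVD]; exact factor_gram UY VY hUY μ
  constructor
  · intro VX hVX
    rw [nuclearNorm]
    apply key_ineq hcn (Matrix.isHermitian_conjTranspose_mul_self _) VY VX hVY hVX μ σ
      hμanti hμpos hσanti hσpos
    rw [conjTranspose_eq_transpose_of_trivial, gram_fromRows, hYgram,
      factor_gram UX VX hUX σ]
  · set A : Matrix (Fin c ⊕ Fin c) (Fin n) ℝ := fromRows Y (UX * Matrix.diagonal σ * VYᵀ)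
      with hA
    have hpsdH : (Aᴴ * A).PosSemidef := Matrix.posSemidef_conjTranspose_mul_self A
    set r : Fin c → ℝ := fun i => Real.sqrt (μ i ^ 2 + σ i ^ 2) with hr
    have hHeq : Aᴴ * A = VY * Matrix.diagonal (fun i => μ i ^ 2 + σ i ^ 2) * VYᵀ := by
      rw [hA, conjTranspose_eq_transpose_of_trivial, gram_fromRows, hYgram, factor_gram UX VY hUX σ, ← Matrix.add_mul,
        ← Matrix.mul_add, Matrix.diagonal_add]
    set R : Matrix (Fin n) (Fin n) ℝ := VY * Matrix.diagonal r * VYᵀ with hR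
    have hr0 : ∀ i, (0:ℝ) ≤ r i := fun i => Real.sqrt_nonneg _
    have hRpsd : R.PosSemidef := by
      have := (Matrix.PosSemidef.diagonal hr0).mul_mul_conjTranspose_same VY
      rwa [conjTranspose_eq_transpose_of_trivial] at this
    have hrr : (Matrix.diagonal r) * (Matrix.diagonal r)
        = Matrix.diagonal (fun i => μ i ^ 2 + σ i ^ 2) := by
      have hfun : (fun i => r i * r i) = fun i => μ i ^ 2 + σ i ^ 2 := by
        funext i
        have hpos : (0:ℝ) ≤ μ i ^ 2 + σ i ^ 2 := by positivity
        simp [hr, Real.mul_self_sqrt hpos]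
      rw [Matrix.diagonal_mul_diagonal, hfun]
    have hsq : R ^ 2 = Aᴴ * A := by
      rw [pow_two, hHeq, hR]
      calc VY * Matrix.diagonal r * VYᵀ * (VY * Matrix.diagonal r * VYᵀ)
          = VY * (Matrix.diagonal r * (VYᵀ * (VY * (Matrix.diagonal r * VYᵀ)))) := by
            simp only [Matrix.mul_assoc]
        _ = VY * (Matrix.diagonal r * (Matrix.diagonal r * VYᵀ)) := by
            rw [← Matrix.mul_assoc VYᵀ VY, hVY, Matrix.one_mul]
        _ = VY * Matrix.diagonal (fun i => μ i ^ 2 + σ i ^ 2) * VYᵀ := by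
            rw [← Matrix.mul_assoc (Matrix.diagonal r), hrr]
            simp only [Matrix.mul_assoc]
    have hReq : R = CFC.sqrt (Aᴴ * A) :=
      (CFC.sqrt_unique (by rw [← sq]; exact hsq) hRpsd.nonneg).symm
    calc nuclearNorm A = (CFC.sqrt (Aᴴ * A)).trace := by
          rw [nuclearNorm]; exact (trace_sqrt_eq hpsdH).symm
      _ = R.trace := by rw [← hReq]
      _ = ∑ i, r i := trace_conj VY hVY r

end mainthm
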